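/- arXiv:2512.21721 — 3 statements merged into one kernel-verified Lean document; each statement's English description precedes it below -/
import Mathlib

section
/- Let p be an agent with neighborhood N_p ⊆ [n] containing p, let x : [n] → ℝ, and let x_p* = (1/|N_p|) ∑_{j ∈ N_p} x_j be the average of x over N_p. Then for any subset N_p* ⊆ N_p with p ∈ N_p*, the quantity 2·( ∑_{j ∈ N_p ∩ N_p* \ {p}} [(x_p − x_j)² − (x_p* − x_j)²] + ∑_{j ∈ N_p \ N_p*} (x_p − x_j)² ) is at least 2(|N_p| + 1)(x_p − x_p*)². -/
open Finset

theorem stmt_0 {n : ℕ} (p : Fin n) (Np Nps : Finset (Fin n)) (x : Fin n → ℝ)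
    (hp : p ∈ Np) (hsub : Nps ⊆ Np) (hps : p ∈ Nps)
    (xstar : ℝ) (hxstar : xstar = (∑ j ∈ Np, x j) / (Np.card : ℝ)) :
    2 * ((∑ j ∈ (Np ∩ Nps) \ {p}, ((x p - x j) ^ 2 - (xstar - x j) ^ 2)) +
        ∑ j ∈ Np \ Nps, (x p - x j) ^ 2) ≥
      2 * ((Np.card : ℝ) + 1) * (x p - xstar) ^ 2 := by
  have hcard : ((Np.card : ℝ)) ≠ 0 := by
    exact_mod_cast Finset.card_ne_zero_of_mem hp
  have hsum : ∑ j ∈ Np, x j = xstar * Np.card := by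
    rw [hxstar]; field_simp
  have hNps : Np ∩ Nps = Nps := inter_eq_right.mpr hsub
  rw [hNps]
  set a := x p with ha
  set f : Fin n → ℝ := fun j => (a - x j) ^ 2 - (xstar - x j) ^ 2 with hf
  have hkey : ∑ j ∈ Np, f j = Np.card * (a - xstar) ^ 2 := by
    have h1 : ∀ j ∈ Np, f j = (a - xstar) * (a + xstar) - (a - xstar) * 2 * x j := by
      intro j _; simp only [hf]; ring
    rw [Finset.sum_congr rfl h1, Finset.sum_sub_distrib, Finset.sum_const,
      ← Finset.mul_sum, hsum]
    ring
  have hset : (Nps \ {p}) ∪ (Np \ Nps) = Np \ {p} := by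
    ext j
    simp only [Finset.mem_union, Finset.mem_sdiff, Finset.mem_singleton]
    constructor
    · rintro (⟨h1, h2⟩ | ⟨h1, h2⟩)
      · exact ⟨hsub h1, h2⟩
      · exact ⟨h1, fun h => h2 (h ▸ hps)⟩
    · rintro ⟨h1, h2⟩
      by_cases hj : j ∈ Nps
      · exact Or.inl ⟨hj, h2⟩
      · exact Or.inr ⟨h1, hj⟩
  have hdisj : Disjoint (Nps \ {p}) (Np \ Nps) := by
    rw [Finset.disjoint_left]
    intro j hj1 hj2
    exact (Finset.mem_sdiff.mp hj2).2 (Finset.mem_sdiff.mp hj1).1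
  have hsplit : ∑ j ∈ Nps \ {p}, f j + ∑ j ∈ Np \ Nps, f j = ∑ j ∈ Np \ {p}, f j := by
    rw [← Finset.sum_union hdisj, hset]
  have hNpp : ∑ j ∈ Np \ {p}, f j = ∑ j ∈ Np, f j - f p := by
    rw [Finset.sum_sdiff_eq_sub (Finset.singleton_subset_iff.mpr hp),
      Finset.sum_singleton]
  have hfp : f p = -(a - xstar) ^ 2 := by simp only [hf, ha]; ring
  have hrest : ∑ j ∈ Np \ Nps, ((a - x j) ^ 2 - f j) ≥ 0 := by
    apply Finset.sum_nonneg
    intro j _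
    simp only [hf]
    nlinarith [sq_nonneg (xstar - x j)]
  have hsub2 : ∑ j ∈ Np \ Nps, ((a - x j) ^ 2 - f j)
      = ∑ j ∈ Np \ Nps, (a - x j) ^ 2 - ∑ j ∈ Np \ Nps, f j :=
    Finset.sum_sub_distrib _ _
  nlinarith [hsplit, hkey, hNpp, hfp, hrest, hsub2]
end

section
/- Let G be a connected simple undirected graph on [h] with 2 ≤ h ≤ n, let x ∈ ℝ^h be a vector whose entries are not all within δ of each other, i.e., max_i x_i − min_i x_i > δ for some δ > 0, and let x* be the result of replacing each x_i by the average of x over the closed neighborhood of i. Then ∑_{i∈[h]} (x_i − x_i*)² ≥ 2δ²/n⁸. -/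
open Finset

lemma list_exists_ge_avg : ∀ (l : List ℝ), l ≠ [] → ∃ a ∈ l, l.sum ≤ l.length * a := by
  intro l
  induction l with
  | nil => simp
  | cons b t ih =>
    intro _
    by_cases ht : t = []
    · subst ht; exact ⟨b, by simp⟩
    · obtain ⟨a, ha, hle⟩ := ih ht
      rcases le_total b a with hba | hab
      · refine ⟨a, by simp [ha], ?_⟩
        simp only [List.sum_cons, List.length_cons]
        push_cast
        nlinarith
      · refine ⟨b, by simp, ?_⟩
        have : t.sum ≤ t.length * b :=
          hle.trans (by nlinarith [Nat.cast_nonneg (α := ℝ) t.length])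
        simp only [List.sum_cons, List.length_cons]
        push_cast
        nlinarith

lemma sq_sub_mid_le (a mm MM : ℝ) (h1 : a ≤ MM) (h2 : mm ≤ a) :
    (a - (MM + mm)/2)^2 ≤ ((MM - mm)/2)^2 := by nlinarith

lemma walk_telescope {V : Type*} {G : SimpleGraph V} (x : V → ℝ) :
    ∀ {u v : V} (p : G.Walk u v),
      x u - x v = (p.darts.map (fun d => x d.toProd.1 - x d.toProd.2)).sum := by
  intro u v p
  induction p with
  | nil => simp
  | cons h' q ih =>
    rw [SimpleGraph.Walk.darts, List.map_cons, List.sum_cons, ← ih]; ring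

set_option maxHeartbeats 1000000 in
theorem stmt_11 {h n : ℕ} (hh : 2 ≤ h) (hhn : h ≤ n)
    (G : SimpleGraph (Fin h)) [DecidableRel G.Adj] (hconn : G.Connected)
    (x : Fin h → ℝ) (δ : ℝ) (hδ : 0 < δ)
    (hne : (Finset.univ : Finset (Fin h)).Nonempty)
    (hgap : Finset.univ.sup' hne x - Finset.univ.inf' hne x > δ)
    (xstar : Fin h → ℝ)
    (hxstar : ∀ i, xstar i =
      (∑ j ∈ insert i (G.neighborFinset i), x j) / ((insert i (G.neighborFinset i)).card : ℝ)) :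
    ∑ i, (x i - xstar i) ^ 2 ≥ 2 * δ ^ 2 / (n : ℝ) ^ 8 := by
  classical
  obtain ⟨M, hMdef⟩ : ∃ M : ℝ, M = (Finset.univ : Finset (Fin h)).sup' hne x := ⟨_, rfl⟩
  obtain ⟨m, hmdef⟩ : ∃ m : ℝ, m = (Finset.univ : Finset (Fin h)).inf' hne x := ⟨_, rfl⟩
  obtain ⟨D, hDdef⟩ : ∃ D : ℝ, D = M - m := ⟨_, rfl⟩
  have hD : D > δ := by rw [hDdef, hMdef, hmdef]; exact hgap
  have hD0 : 0 < D := hδ.trans hD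
  have hxle : ∀ i, x i ≤ M := fun i => hMdef ▸ Finset.le_sup' x (mem_univ i)
  have hmle : ∀ i, m ≤ x i := fun i => hmdef ▸ Finset.inf'_le x (mem_univ i)
  have hn2 : (2:ℝ) ≤ (n:ℝ) := by exact_mod_cast hh.trans hhn
  have hhr : (h:ℝ) ≤ (n:ℝ) := by exact_mod_cast hhn
  have hn0 : (0:ℝ) < n := by linarith
  obtain ⟨i₀, -, hi₀⟩ := Finset.exists_mem_eq_sup' hne x
  obtain ⟨i₁, -, hi₁⟩ := Finset.exists_mem_eq_inf' hne x
  -- find an edge with a big gap, along a path from i₀ to i₁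
  obtain ⟨w⟩ := hconn i₀ i₁
  obtain ⟨p, hpPath⟩ : ∃ p : G.Walk i₀ i₁, p.IsPath := ⟨w.toPath, w.toPath.property⟩
  have hlen : p.length < h := by simpa using hpPath.length_lt
  have htel : x i₀ - x i₁ = (p.darts.map (fun d => x d.toProd.1 - x d.toProd.2)).sum :=
    walk_telescope x p
  have hD01 : x i₀ - x i₁ = D := by rw [hDdef, hMdef, hmdef, hi₀, hi₁]
  have hlne : p.darts.map (fun d => x d.toProd.1 - x d.toProd.2) ≠ [] := by
    intro hnil
    rw [hnil] at htel
    simp at htel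
    rw [htel] at hD01
    linarith
  obtain ⟨val, hvmem, hvsum⟩ := list_exists_ge_avg _ hlne
  obtain ⟨dd, -, hddval⟩ := List.mem_map.mp hvmem
  obtain ⟨a, ha⟩ : ∃ a, a = dd.toProd.1 := ⟨_, rfl⟩
  obtain ⟨b, hb⟩ : ∃ b, b = dd.toProd.2 := ⟨_, rfl⟩
  have hadj : G.Adj a b := by rw [ha, hb]; exact dd.adj
  obtain ⟨e, hedef⟩ : ∃ e : ℝ, e = x a - x b := ⟨_, rfl⟩
  have hval : val = e := by rw [hedef, ha, hb]; exact hddval.symm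
  have hlenle : ((p.darts.map (fun d => x d.toProd.1 - x d.toProd.2)).length : ℝ) ≤ (n:ℝ) := by
    rw [List.length_map]
    have : (p.darts.length : ℝ) ≤ (h:ℝ) := by
      exact_mod_cast (le_of_lt (by rw [SimpleGraph.Walk.length_darts]; exact hlen))
    linarith
  have hDe : D ≤ (n:ℝ) * e := by
    rw [hval] at hvsum
    rw [← hD01, htel]
    have hL0 : (0:ℝ) ≤ ((p.darts.map (fun d => x d.toProd.1 - x d.toProd.2)).length : ℝ) :=
      Nat.cast_nonneg _
    rcases le_or_gt e 0 with he | he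
    · exfalso
      have : (p.darts.map (fun d => x d.toProd.1 - x d.toProd.2)).sum ≤ 0 :=
        hvsum.trans (mul_nonpos_of_nonneg_of_nonpos hL0 he)
      rw [← htel, hD01] at this; linarith
    · exact hvsum.trans (mul_le_mul_of_nonneg_right hlenle he.le)
  have he0 : 0 < e := by
    rcases le_or_gt e 0 with he | he
    · exfalso
      have : (n:ℝ) * e ≤ 0 := mul_nonpos_of_nonneg_of_nonpos hn0.le he
      linarith
    · exact he
  have hsq : D^2 ≤ (n:ℝ)^2 * e^2 := by
    have := mul_self_le_mul_self hD0.le hDe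
    calc D^2 = D * D := by ring
      _ ≤ ((n:ℝ)*e) * ((n:ℝ)*e) := this
      _ = (n:ℝ)^2 * e^2 := by ring
  -- algebraic setup
  obtain ⟨c, hcdef⟩ : ∃ c : ℝ, c = (M + m)/2 := ⟨_, rfl⟩
  obtain ⟨xt, hxtdef⟩ : ∃ xt : Fin h → ℝ, xt = fun i => x i - c := ⟨_, rfl⟩
  obtain ⟨y, hydef⟩ : ∃ y : Fin h → ℝ, y = fun i => x i - xstar i := ⟨_, rfl⟩
  obtain ⟨d, hddef⟩ : ∃ d : Fin h → ℝ,
    d = fun i => ((insert i (G.neighborFinset i)).card : ℝ) := ⟨_, rfl⟩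
  have hd1 : ∀ i, (1:ℝ) ≤ d i := by
    intro i
    have h1 : 1 ≤ (insert i (G.neighborFinset i)).card :=
      Finset.card_pos.mpr ⟨i, mem_insert_self _ _⟩
    simp only [hddef]
    exact_mod_cast h1
  have hdn : ∀ i, d i ≤ (n:ℝ) := by
    intro i
    have h1 : (insert i (G.neighborFinset i)).card ≤ h := by
      simpa using Finset.card_le_card (Finset.subset_univ (insert i (G.neighborFinset i)))
    have h2 : (d i) ≤ (h:ℝ) := by simp only [hddef]; exact_mod_cast h1
    linarith
  have hdy : ∀ i, d i * y i = ∑ j ∈ G.neighborFinset i, (x i - x j) := by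
    intro i
    have hd0 : d i ≠ 0 := by linarith [hd1 i]
    have hxs : d i * xstar i = ∑ j ∈ insert i (G.neighborFinset i), x j := by
      rw [hxstar i, hddef]
      rw [hddef] at hd0
      field_simp
    have h1 : d i * y i = d i * x i - d i * xstar i := by rw [hydef]; ring
    rw [h1, hxs]
    have h2 : d i * x i = ∑ _j ∈ insert i (G.neighborFinset i), x i := by
      rw [Finset.sum_const, nsmul_eq_mul, hddef]
    rw [h2, ← Finset.sum_sub_distrib,
      Finset.sum_insert (by simp [SimpleGraph.mem_neighborFinset]), sub_self, zero_add]
  obtain ⟨A, hAdef⟩ : ∃ A : Finset (Fin h × Fin h),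
    A = Finset.univ.filter (fun q => G.Adj q.1 q.2) := ⟨_, rfl⟩
  have hAiff : ∀ q : Fin h × Fin h, q ∈ A ↔ q.1 ∈ Finset.univ ∧ q.2 ∈ G.neighborFinset q.1 := by
    intro q; simp [hAdef, SimpleGraph.mem_neighborFinset]
  obtain ⟨S, hSdef⟩ : ∃ S : ℝ, S = ∑ i, (d i * xt i) * y i := ⟨_, rfl⟩
  have hS1 : S = ∑ q ∈ A, (x q.1 - x q.2) * xt q.1 := by
    rw [Finset.sum_finset_product' A Finset.univ (fun i => G.neighborFinset i) hAiff
      (f := fun i j => (x i - x j) * xt i)]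
    rw [hSdef]
    refine Finset.sum_congr rfl fun i _ => ?_
    rw [← Finset.sum_mul, ← hdy i]; ring
  have hswap : ∑ q ∈ A, (x q.1 - x q.2) * xt q.1 = ∑ q ∈ A, (x q.2 - x q.1) * xt q.2 := by
    refine Finset.sum_nbij' Prod.swap Prod.swap ?_ ?_ ?_ ?_ ?_
    · intro q hq; simp only [hAdef, mem_filter, mem_univ, true_and] at hq ⊢
      exact hq.symm
    · intro q hq; simp only [hAdef, mem_filter, mem_univ, true_and] at hq ⊢
      exact hq.symm
    · intro q _; simp
    · intro q _; simp
    · intro q _; simp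
  have h2S : 2 * S = ∑ q ∈ A, (x q.1 - x q.2)^2 := by
    have h0 : 2 * S = (∑ q ∈ A, (x q.1 - x q.2) * xt q.1) + ∑ q ∈ A, (x q.2 - x q.1) * xt q.2 := by
      rw [← hswap, ← hS1]; ring
    rw [h0, ← Finset.sum_add_distrib]
    refine Finset.sum_congr rfl fun q _ => ?_
    rw [hxtdef]; ring
  have hab : a ≠ b := G.ne_of_adj hadj
  have hSge : e^2 ≤ S := by
    have hsub : ({(a,b), (b,a)} : Finset (Fin h × Fin h)) ⊆ A := by
      intro q hq
      simp only [mem_insert, mem_singleton] at hq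
      rcases hq with rfl | rfl
      · simp [hAdef, hadj]
      · simp [hAdef, hadj.symm]
    have hnotmem : (a, b) ∉ ({(b, a)} : Finset (Fin h × Fin h)) := by
      simp only [mem_singleton, Prod.mk.injEq, not_and]
      intro hh'; exact absurd hh' hab
    have hsum2 : ∑ q ∈ ({(a,b), (b,a)} : Finset (Fin h × Fin h)), (x q.1 - x q.2)^2
        = 2 * e^2 := by
      rw [Finset.sum_insert hnotmem, Finset.sum_singleton, hedef]; ring
    have hle := Finset.sum_le_sum_of_subset_of_nonneg hsub
      (fun q _ _ => sq_nonneg (x q.1 - x q.2))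
    rw [hsum2, ← h2S] at hle
    linarith
  have hCS : S^2 ≤ (∑ i, (d i * xt i)^2) * (∑ i, y i ^ 2) := by
    rw [hSdef]
    exact Finset.sum_mul_sq_le_sq_mul_sq Finset.univ _ _
  have hxt : ∀ i, (xt i)^2 ≤ (D/2)^2 := by
    intro i
    rw [hxtdef, hcdef, hDdef]
    exact sq_sub_mid_le (x i) m M (hxle i) (hmle i)
  have hP : ∑ i, (d i * xt i)^2 ≤ (n:ℝ)^3 * D^2 / 4 := by
    have hterm : ∀ i ∈ Finset.univ, (d i * xt i)^2 ≤ (n:ℝ)^2 * (D/2)^2 := by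
      intro i _
      have h1 : (0:ℝ) ≤ d i := by linarith [hd1 i]
      have h4 : (d i)^2 ≤ (n:ℝ)^2 := pow_le_pow_left₀ h1 (hdn i) 2
      calc (d i * xt i)^2 = (d i)^2 * (xt i)^2 := by ring
        _ ≤ (n:ℝ)^2 * (xt i)^2 := mul_le_mul_of_nonneg_right h4 (sq_nonneg _)
        _ ≤ (n:ℝ)^2 * (D/2)^2 := mul_le_mul_of_nonneg_left (hxt i) (by positivity)
    calc ∑ i, (d i * xt i)^2 ≤ ∑ _i : Fin h, (n:ℝ)^2 * (D/2)^2 := Finset.sum_le_sum hterm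
      _ = (h:ℝ) * ((n:ℝ)^2 * (D/2)^2) := by
          rw [Finset.sum_const, nsmul_eq_mul]; simp
      _ ≤ (n:ℝ) * ((n:ℝ)^2 * (D/2)^2) :=
          mul_le_mul_of_nonneg_right hhr (by positivity)
      _ = (n:ℝ)^3 * D^2 / 4 := by ring
  obtain ⟨Q, hQdef⟩ : ∃ Q : ℝ, Q = ∑ i, y i ^ 2 := ⟨_, rfl⟩
  have hQ0 : (0:ℝ) ≤ Q := hQdef ▸ Finset.sum_nonneg fun i _ => sq_nonneg _
  rw [← hQdef] at hCS
  have h14 : D^4 ≤ (n:ℝ)^4 * e^4 := by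
    have := mul_self_le_mul_self (sq_nonneg D) hsq
    calc D^4 = D^2 * D^2 := by ring
      _ ≤ ((n:ℝ)^2*e^2) * ((n:ℝ)^2*e^2) := this
      _ = (n:ℝ)^4 * e^4 := by ring
  have h15 : e^4 ≤ S^2 := by
    have := mul_self_le_mul_self (sq_nonneg e) hSge
    calc e^4 = e^2 * e^2 := by ring
      _ ≤ S * S := this
      _ = S^2 := by ring
  have h1 : D^4 ≤ (n:ℝ)^4 * S^2 :=
    h14.trans (by
      calc (n:ℝ)^4 * e^4 ≤ (n:ℝ)^4 * S^2 := mul_le_mul_of_nonneg_left h15 (by positivity))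
  have h2 : S^2 ≤ ((n:ℝ)^3 * D^2 / 4) * Q := hCS.trans (mul_le_mul_of_nonneg_right hP hQ0)
  have hfin : D^4 ≤ (n:ℝ)^4 * (((n:ℝ)^3 * D^2 / 4) * Q) :=
    h1.trans (mul_le_mul_of_nonneg_left h2 (by positivity))
  have hQn : 4 * D^2 ≤ (n:ℝ)^7 * Q := by
    have hD2 : (0:ℝ) < D^2 := by positivity
    have hkey : D^2 * (4 * D^2) ≤ D^2 * ((n:ℝ)^7 * Q) := by
      calc D^2 * (4 * D^2) = 4 * D^4 := by ring
        _ ≤ 4 * ((n:ℝ)^4 * (((n:ℝ)^3 * D^2 / 4) * Q)) := by linarith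
        _ = D^2 * ((n:ℝ)^7 * Q) := by ring
    exact le_of_mul_le_mul_left hkey hD2
  have hgoal : ∑ i, (x i - xstar i) ^ 2 = Q := by
    rw [hQdef]
    exact Finset.sum_congr rfl fun i _ => by rw [hydef]
  rw [ge_iff_le, hgoal, div_le_iff₀ (by positivity)]
  have hδ2 : δ^2 ≤ D^2 := pow_le_pow_left₀ hδ.le hD.le 2
  have e1 : (n:ℝ)*(4*D^2) ≤ (n:ℝ)*((n:ℝ)^7*Q) := mul_le_mul_of_nonneg_left hQn hn0.le
  have e2 : (2:ℝ)*(4*D^2) ≤ (n:ℝ)*(4*D^2) := mul_le_mul_of_nonneg_right hn2 (by positivity)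
  have e3 : (n:ℝ)*((n:ℝ)^7*Q) = Q * (n:ℝ)^8 := by ring
  linarith [sq_nonneg δ]
end

section
/- Let x : [n] → ℝ, let E be the edge set of a simple undirected graph on [n], and suppose agent p updates to x_p* (the average of x over its closed neighborhood N_p) while all other values stay fixed. Let E' be any edge set that agrees with E on pairs not containing p and whose edges at p form a subset of those of E. Define Z = ∑_{(i,j): i,j ∈[n]} (x_i − x_j)²·1{(i,j) ∈ E} (sum over ordered pairs) and Z' the analogous quantity for the updated values and E'. Then Z − Z' ≥ 2(|N_p| + 1)(x_p − x_p*)² ≥ 0; in particular Z' ≤ Z. -/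
open Finset

theorem stmt_12 {n : ℕ} (x : Fin n → ℝ) (p : Fin n)
    (G G' : SimpleGraph (Fin n)) [DecidableRel G.Adj] [DecidableRel G'.Adj]
    (hagree : ∀ i j : Fin n, i ≠ p → j ≠ p → (G'.Adj i j ↔ G.Adj i j))
    (hcontract : ∀ j : Fin n, G'.Adj p j → G.Adj p j)
    (Np : Finset (Fin n)) (hNp : Np = insert p (G.neighborFinset p))
    (xstar : ℝ) (hxstar : xstar = (∑ j ∈ Np, x j) / (Np.card : ℝ))
    (x' : Fin n → ℝ) (hx' : x' = Function.update x p xstar)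
    (Z Z' : ℝ)
    (hZ : Z = ∑ i, ∑ j, if G.Adj i j then (x i - x j) ^ 2 else 0)
    (hZ' : Z' = ∑ i, ∑ j, if G'.Adj i j then (x' i - x' j) ^ 2 else 0) :
    Z - Z' ≥ 2 * ((Np.card : ℝ) + 1) * (x p - xstar) ^ 2 ∧ Z' ≤ Z := by
  classical
  set N := G.neighborFinset p with hN
  have hpN : p ∉ N := by simp [hN]
  have hcard : Np.card = N.card + 1 := by
    rw [hNp, Finset.card_insert_of_notMem hpN]
  have hm0 : (Np.card : ℝ) ≠ 0 := by
    rw [hcard]; push_cast; positivity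
  have hsum : (Np.card : ℝ) * xstar = x p + ∑ j ∈ N, x j := by
    rw [hxstar, mul_div_cancel₀ _ hm0, hNp, Finset.sum_insert hpN]
  set f : Fin n → Fin n → ℝ := fun i j => if G.Adj i j then (x i - x j) ^ 2 else 0 with hf
  set g : Fin n → Fin n → ℝ := fun i j => if G'.Adj i j then (x' i - x' j) ^ 2 else 0 with hg
  have hx'ne : ∀ j : Fin n, j ≠ p → x' j = x j := by
    intro j hj; rw [hx', Function.update_of_ne hj]
  have hx'p : x' p = xstar := by rw [hx', Function.update_self]
  -- diagonal zero and symmetry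
  have fsymm : ∀ i j, f i j = f j i := by
    intro i j
    simp only [hf]
    rw [show (x i - x j) ^ 2 = (x j - x i) ^ 2 by ring]
    exact if_congr (G.adj_comm i j) rfl rfl
  have gsymm : ∀ i j, g i j = g j i := by
    intro i j
    simp only [hg]
    rw [show (x' i - x' j) ^ 2 = (x' j - x' i) ^ 2 by ring]
    exact if_congr (G'.adj_comm i j) rfl rfl
  have fdiag : ∀ i, f i i = 0 := by intro i; simp [hf]
  have gdiag : ∀ i, g i i = 0 := by intro i; simp [hg]
  have hoff : ∀ i j, i ≠ p → j ≠ p → f i j - g i j = 0 := by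
    intro i j hi hj
    simp only [hf, hg, hx'ne i hi, hx'ne j hj, hagree i j hi hj, sub_self]
  -- key decomposition
  have key : Z - Z' = 2 * ∑ j, (f p j - g p j) := by
    rw [hZ, hZ', ← Finset.sum_sub_distrib]
    have : ∀ i, (∑ j, f i j) - (∑ j, g i j) = ∑ j, (f i j - g i j) := by
      intro i; rw [Finset.sum_sub_distrib]
    show ∑ i, ((∑ j, f i j) - ∑ j, g i j) = 2 * ∑ j, (f p j - g p j)
    simp only [this]
    have hinner : ∀ i ∈ ({p}ᶜ : Finset (Fin n)), (∑ j, (f i j - g i j)) = f p i - g p i := by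
      intro i hi
      have hip : i ≠ p := by simpa using hi
      rw [Fintype.sum_eq_add_sum_compl p (fun j => f i j - g i j)]
      have hz : ∀ j ∈ ({p}ᶜ : Finset (Fin n)), f i j - g i j = 0 := by
        intro j hj
        exact hoff i j hip (by simpa using hj)
      rw [Finset.sum_eq_zero hz, add_zero, fsymm, gsymm]
    have e2 : ∑ i, ∑ j, (f i j - g i j)
        = (∑ j, (f p j - g p j)) + ∑ i ∈ ({p}ᶜ : Finset (Fin n)), (f p i - g p i) := by
      rw [Fintype.sum_eq_add_sum_compl p (fun i => ∑ j, (f i j - g i j))]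
      rw [Finset.sum_congr rfl hinner]
    have e3 : ∑ j, (f p j - g p j)
        = (f p p - g p p) + ∑ i ∈ ({p}ᶜ : Finset (Fin n)), (f p i - g p i) :=
      Fintype.sum_eq_add_sum_compl p (fun j => f p j - g p j)
    rw [fdiag, gdiag] at e3
    rw [e2]
    linarith
  -- termwise bound for g
  have hterm : ∀ j, f p j - g p j ≥ f p j - (if G.Adj p j then (xstar - x j) ^ 2 else 0) := by
    intro j
    have : g p j ≤ (if G.Adj p j then (xstar - x j) ^ 2 else 0) := by
      simp only [hg]
      by_cases h : G'.Adj p j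
      · have hG : G.Adj p j := hcontract j h
        have hjp : j ≠ p := fun e => G'.irrefl (e ▸ h)
        rw [if_pos h, if_pos hG, hx'p, hx'ne j hjp]
      · rw [if_neg h]
        split <;> positivity
    linarith
  have hAsum : ∑ j, (f p j - (if G.Adj p j then (xstar - x j) ^ 2 else 0))
      = ((Np.card : ℝ) + 1) * (x p - xstar) ^ 2 := by
    have h1 : ∀ j, f p j - (if G.Adj p j then (xstar - x j) ^ 2 else 0)
        = (if G.Adj p j then ((x p ^ 2 - xstar ^ 2) + (2 * (xstar - x p)) * x j) else 0) := by
      intro j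
      simp only [hf]
      split
      · ring
      · ring
    simp only [h1]
    rw [← Finset.sum_filter]
    have hfilt : Finset.univ.filter (G.Adj p) = N := (SimpleGraph.neighborFinset_eq_filter G (v := p)).symm
    rw [hfilt, Finset.sum_add_distrib, Finset.sum_const, ← Finset.mul_sum, nsmul_eq_mul]
    have hc : (Np.card : ℝ) = (N.card : ℝ) + 1 := by rw [hcard]; push_cast; ring
    have hS : ∑ j ∈ N, x j = (Np.card : ℝ) * xstar - x p := by linarith [hsum]
    rw [hS, hc]
    ring
  have hge : Z - Z' ≥ 2 * ((Np.card : ℝ) + 1) * (x p - xstar) ^ 2 := by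
    rw [key]
    have : ∑ j, (f p j - g p j) ≥ ∑ j, (f p j - (if G.Adj p j then (xstar - x j) ^ 2 else 0)) :=
      Finset.sum_le_sum fun j _ => hterm j
    rw [hAsum] at this
    nlinarith [sq_nonneg (x p - xstar), Nat.cast_nonneg (α := ℝ) Np.card]
  refine ⟨hge, ?_⟩
  nlinarith [hge, sq_nonneg (x p - xstar), Nat.cast_nonneg (α := ℝ) Np.card]
end
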